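/- The K-orbit of F₀, where K = {diag(X, conj X) : X ∈ U(2)} acting on flags in ℂ⁴, equals {F_w : w ∈ ℂ} ∪ {F_∞}, and this orbit is a complex submanifold of the flag variety isomorphic to ℙ¹(ℂ). -/

import Mathlib

open Matrix Complex

noncomputable section

/-- The flag `F_w`: `F_w³ = span(w u₁ + u₂)`, `F_w² = span(w u₁ + u₂, u₃ - w u₄)`,
in the coordinates where the standard basis of `ℂ⁴` is `u₁,…,u₄`. -/
def Fw (w : ℂ) : Submodule ℂ (Fin 4 → ℂ) × Submodule ℂ (Fin 4 → ℂ) :=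
  (Submodule.span ℂ {![w, 1, 0, 0]}, Submodule.span ℂ {![w, 1, 0, 0], ![0, 0, 1, -w]})

/-- The flag `F_∞`: `F_∞³ = span(u₁)`, `F_∞² = span(u₁, u₄)`. -/
def Finfty : Submodule ℂ (Fin 4 → ℂ) × Submodule ℂ (Fin 4 → ℂ) :=
  (Submodule.span ℂ {![1, 0, 0, 0]}, Submodule.span ℂ {![1, 0, 0, 0], ![0, 0, 0, 1]})

/-- The base flag `F₀ = F_0`: `F₀³ = span(u₂)`, `F₀² = span(u₂, u₃)`. -/
def F0 : Submodule ℂ (Fin 4 → ℂ) × Submodule ℂ (Fin 4 → ℂ) :=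
  (Submodule.span ℂ {![0, 1, 0, 0]}, Submodule.span ℂ {![0, 1, 0, 0], ![0, 0, 1, 0]})

/-- `K = {diag(X, conj X) : X ∈ U(2)}` in the basis `(u₁, u₂; u₃, u₄)`. -/
def K9 : Set (Matrix (Fin 4) (Fin 4) ℂ) :=
  {g | ∃ X : Matrix (Fin 2) (Fin 2) ℂ, X ∈ Matrix.unitaryGroup (Fin 2) ℂ ∧
    g = Matrix.reindex finSumFinEquiv finSumFinEquiv
      (Matrix.fromBlocks X 0 0 (X.map (starRingEnd ℂ)))}

/-- `g` acts on a flag by applying the linear map to each subspace. -/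
def mapFlag (g : Matrix (Fin 4) (Fin 4) ℂ)
    (F : Submodule ℂ (Fin 4 → ℂ) × Submodule ℂ (Fin 4 → ℂ)) :
    Submodule ℂ (Fin 4 → ℂ) × Submodule ℂ (Fin 4 → ℂ) :=
  (F.1.map g.mulVecLin, F.2.map g.mulVecLin)

-- ======== auxiliary lemmas ========

lemma aux_symm0 : (finSumFinEquiv.symm (0 : Fin 4) : Fin 2 ⊕ Fin 2) = Sum.inl 0 := by decide
lemma aux_symm1 : (finSumFinEquiv.symm (1 : Fin 4) : Fin 2 ⊕ Fin 2) = Sum.inl 1 := by decide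
lemma aux_symm2 : (finSumFinEquiv.symm (2 : Fin 4) : Fin 2 ⊕ Fin 2) = Sum.inr 0 := by decide
lemma aux_symm3 : (finSumFinEquiv.symm (3 : Fin 4) : Fin 2 ⊕ Fin 2) = Sum.inr 1 := by decide

lemma aux_mv2 (X : Matrix (Fin 2) (Fin 2) ℂ) :
    (Matrix.fromBlocks X 0 0 (X.map (starRingEnd ℂ))).submatrix
      finSumFinEquiv.symm finSumFinEquiv.symm *ᵥ ![0,1,0,0]
      = ![X 0 1, X 1 1, 0, 0] := by
  ext i
  fin_cases i <;>
    simp [Matrix.mulVec, dotProduct, Fin.sum_univ_four, Matrix.reindex_apply,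
      Matrix.submatrix_apply, aux_symm0, aux_symm1, aux_symm2, aux_symm3]

lemma aux_mv3 (X : Matrix (Fin 2) (Fin 2) ℂ) :
    (Matrix.fromBlocks X 0 0 (X.map (starRingEnd ℂ))).submatrix
      finSumFinEquiv.symm finSumFinEquiv.symm *ᵥ ![0,0,1,0]
      = ![0, 0, starRingEnd ℂ (X 0 0), starRingEnd ℂ (X 1 0)] := by
  ext i
  fin_cases i <;>
    simp [Matrix.mulVec, dotProduct, Fin.sum_univ_four, Matrix.reindex_apply,
      Matrix.submatrix_apply, aux_symm0, aux_symm1, aux_symm2, aux_symm3]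

lemma aux_mapFlag (X : Matrix (Fin 2) (Fin 2) ℂ) :
    mapFlag (Matrix.reindex finSumFinEquiv finSumFinEquiv
      (Matrix.fromBlocks X 0 0 (X.map (starRingEnd ℂ)))) F0
    = (Submodule.span ℂ {![X 0 1, X 1 1, 0, 0]},
       Submodule.span ℂ {![X 0 1, X 1 1, 0, 0],
         ![0, 0, starRingEnd ℂ (X 0 0), starRingEnd ℂ (X 1 0)]}) := by
  simp [mapFlag, F0, Submodule.map_span, Set.image_insert_eq, Set.image_singleton,
    Matrix.mulVecLin_apply, aux_mv2 X, aux_mv3 X]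

lemma aux_smul4 (c a b d e : ℂ) : c • ![a,b,d,e] = ![c*a, c*b, c*d, c*e] := by
  ext i; fin_cases i <;> simp

lemma aux_span_pair_smul (c d : ℂ) (hc : c ≠ 0) (hd : d ≠ 0) (x y : Fin 4 → ℂ) :
    Submodule.span ℂ {c • x, d • y} = Submodule.span ℂ {x, y} := by
  apply le_antisymm <;> rw [Submodule.span_le, Set.insert_subset_iff, Set.singleton_subset_iff]
  · exact ⟨Submodule.smul_mem _ _ (Submodule.subset_span (by simp)),
      Submodule.smul_mem _ _ (Submodule.subset_span (by simp))⟩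
  · constructor
    · have hmem : c⁻¹ • (c • x) ∈ Submodule.span ℂ {c • x, d • y} :=
        Submodule.smul_mem _ _ (Submodule.subset_span (by simp))
      simpa [smul_smul, inv_mul_cancel₀ hc] using hmem
    · have hmem : d⁻¹ • (d • y) ∈ Submodule.span ℂ {c • x, d • y} :=
        Submodule.smul_mem _ _ (Submodule.subset_span (by simp))
      simpa [smul_smul, inv_mul_cancel₀ hd] using hmem

-- unitary entry relations
lemma aux_u_orth (X : Matrix (Fin 2) (Fin 2) ℂ) (hX : X ∈ Matrix.unitaryGroup (Fin 2) ℂ) :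
    starRingEnd ℂ (X 0 0) * X 0 1 + starRingEnd ℂ (X 1 0) * X 1 1 = 0 := by
  have := congrFun (congrFun hX.1 0) 1
  simpa [Matrix.mul_apply, Fin.sum_univ_two, Matrix.star_apply, mul_comm] using this

lemma aux_u_diag (X : Matrix (Fin 2) (Fin 2) ℂ) (hX : X ∈ Matrix.unitaryGroup (Fin 2) ℂ) :
    X 0 0 * starRingEnd ℂ (X 0 0) = starRingEnd ℂ (X 1 1) * X 1 1 := by
  have h1 := congrFun (congrFun hX.2 0) 0
  have h2 := congrFun (congrFun hX.1 1) 1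
  simp [Matrix.mul_apply, Fin.sum_univ_two, Matrix.star_apply] at h1 h2
  linear_combination h1 - h2

lemma aux_u_col1 (X : Matrix (Fin 2) (Fin 2) ℂ) (hX : X ∈ Matrix.unitaryGroup (Fin 2) ℂ) :
    starRingEnd ℂ (X 0 1) * X 0 1 + starRingEnd ℂ (X 1 1) * X 1 1 = 1 := by
  have := congrFun (congrFun hX.1 1) 1
  simpa [Matrix.mul_apply, Fin.sum_univ_two, Matrix.star_apply] using this

lemma aux_u_row1 (X : Matrix (Fin 2) (Fin 2) ℂ) (hX : X ∈ Matrix.unitaryGroup (Fin 2) ℂ) :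
    X 1 0 * starRingEnd ℂ (X 1 0) + X 1 1 * starRingEnd ℂ (X 1 1) = 1 := by
  have := congrFun (congrFun hX.2 1) 1
  simpa [Matrix.mul_apply, Fin.sum_univ_two, Matrix.star_apply] using this

lemma aux_orbit_sub (Fl) (h : ∃ g ∈ K9, mapFlag g F0 = Fl) :
    (∃ w : ℂ, Fl = Fw w) ∨ Fl = Finfty := by
  obtain ⟨g, ⟨X, hX, rfl⟩, rfl⟩ := h
  rw [aux_mapFlag X]
  by_cases h11 : X 1 1 = 0
  · right
    have hd := aux_u_diag X hX
    rw [h11] at hd; simp at hd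
    have h00 : X 0 0 = 0 := hd
    have h01 : X 0 1 ≠ 0 := by
      intro h
      have := aux_u_col1 X hX
      rw [h, h11] at this; simp at this
    have h10 : starRingEnd ℂ (X 1 0) ≠ 0 := by
      intro h
      have := aux_u_row1 X hX
      rw [h, h11] at this; simp at this
    have e1 : ![X 0 1, X 1 1, 0, 0] = X 0 1 • ![1, 0, 0, 0] := by
      rw [aux_smul4, h11]; norm_num
    have e2 : ![(0:ℂ), 0, starRingEnd ℂ (X 0 0), starRingEnd ℂ (X 1 0)]
        = starRingEnd ℂ (X 1 0) • ![0, 0, 0, 1] := by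
      rw [aux_smul4, h00]; norm_num
    rw [e1, e2, Finfty]
    refine Prod.ext ?_ ?_
    · exact Submodule.span_singleton_smul_eq (isUnit_iff_ne_zero.mpr h01) _
    · exact aux_span_pair_smul _ _ h01 h10 _ _
  · left
    refine ⟨X 0 1 / X 1 1, ?_⟩
    set w : ℂ := X 0 1 / X 1 1 with hw
    have h00 : X 0 0 ≠ 0 := by
      intro h
      have hd := aux_u_diag X hX
      rw [h] at hd; simp at hd
      exact h11 hd
    have hc00 : starRingEnd ℂ (X 0 0) ≠ 0 := by simpa using h00
    have e1 : ![X 0 1, X 1 1, 0, 0] = X 1 1 • ![w, 1, 0, 0] := by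
      rw [aux_smul4, hw]; field_simp; simp
    have e2 : ![(0:ℂ), 0, starRingEnd ℂ (X 0 0), starRingEnd ℂ (X 1 0)]
        = starRingEnd ℂ (X 0 0) • ![0, 0, 1, -w] := by
      rw [aux_smul4]
      have horth := aux_u_orth X hX
      have : starRingEnd ℂ (X 1 0) = starRingEnd ℂ (X 0 0) * -w := by
        rw [hw]; field_simp; linear_combination horth
      rw [this]; norm_num
    rw [e1, e2, Fw]
    refine Prod.ext ?_ ?_
    · exact Submodule.span_singleton_smul_eq (isUnit_iff_ne_zero.mpr h11) _
    · exact aux_span_pair_smul _ _ h11 hc00 _ _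

lemma aux_Finfty_mem : ∃ g ∈ K9, mapFlag g F0 = Finfty := by
  refine ⟨_, ⟨!![0, 1; 1, 0], ?_, rfl⟩, ?_⟩
  · constructor <;>
      (ext i j; fin_cases i <;> fin_cases j <;>
        simp [Matrix.mul_apply, Fin.sum_univ_two, Matrix.star_apply, Matrix.one_apply])
  · rw [aux_mapFlag]
    simp [Finfty]

lemma aux_Fw_mem (w : ℂ) : ∃ g ∈ K9, mapFlag g F0 = Fw w := by
  set r : ℝ := Real.sqrt (1 + Complex.normSq w) with hrdef
  have hpos : (0:ℝ) < 1 + Complex.normSq w := by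
    have := Complex.normSq_nonneg w; linarith
  have hrpos : (0:ℝ) < r := Real.sqrt_pos.mpr hpos
  have hr : (r:ℂ) ≠ 0 := by exact_mod_cast hrpos.ne'
  have hrr : r * r = 1 + Complex.normSq w := Real.mul_self_sqrt hpos.le
  have hr2 : (r:ℂ) * r = 1 + starRingEnd ℂ w * w := by
    rw [← Complex.ofReal_mul, hrr, Complex.ofReal_add, Complex.ofReal_one,
      Complex.normSq_eq_conj_mul_self]
  set X : Matrix (Fin 2) (Fin 2) ℂ :=
    !![(r:ℂ)⁻¹, (r:ℂ)⁻¹ * w; -((r:ℂ)⁻¹ * starRingEnd ℂ w), (r:ℂ)⁻¹] with hXdef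
  have hX : X ∈ Matrix.unitaryGroup (Fin 2) ℂ := by
    constructor <;>
      (ext i j; fin_cases i <;> fin_cases j <;>
        (simp [hXdef, Matrix.mul_apply, Fin.sum_univ_two, Matrix.star_apply,
          Matrix.one_apply, _root_.map_mul, map_inv₀, Complex.conj_ofReal]
         try field_simp
         try linear_combination -hr2
         try linear_combination hr2
         try linear_combination))
  refine ⟨_, ⟨X, hX, rfl⟩, ?_⟩
  rw [aux_mapFlag]
  have hX01 : X 0 1 = (r:ℂ)⁻¹ * w := rfl
  have hX11 : X 1 1 = (r:ℂ)⁻¹ := rfl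
  have hX00 : X 0 0 = (r:ℂ)⁻¹ := rfl
  have hX10 : X 1 0 = -((r:ℂ)⁻¹ * starRingEnd ℂ w) := rfl
  have hinv : ((r:ℂ)⁻¹) ≠ 0 := inv_ne_zero hr
  have e1 : ![X 0 1, X 1 1, 0, 0] = (r:ℂ)⁻¹ • ![w, 1, 0, 0] := by
    rw [hX01, hX11, aux_smul4]; norm_num
  have e2 : ![(0:ℂ), 0, starRingEnd ℂ (X 0 0), starRingEnd ℂ (X 1 0)]
      = (r:ℂ)⁻¹ • ![0, 0, 1, -w] := by
    rw [hX00, hX10, aux_smul4]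
    simp [_root_.map_mul, map_inv₀, Complex.conj_ofReal]
  rw [e1, e2, Fw]
  refine Prod.ext ?_ ?_
  · exact Submodule.span_singleton_smul_eq (isUnit_iff_ne_zero.mpr hinv) _
  · exact aux_span_pair_smul _ _ hinv hinv _ _

/-- The candidate embedding, as a function of a representative vector. -/
def f9 (v : Fin 2 → ℂ) : Submodule ℂ (Fin 4 → ℂ) × Submodule ℂ (Fin 4 → ℂ) :=
  (Submodule.span ℂ {![v 0, v 1, 0, 0]},
   Submodule.span ℂ {![v 0, v 1, 0, 0], ![0, 0, v 1, -(v 0)]})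

lemma aux_f9_smul (c : ℂ) (hc : c ≠ 0) (v : Fin 2 → ℂ) : f9 (c • v) = f9 v := by
  have e1 : ![(c • v) 0, (c • v) 1, 0, 0] = c • ![v 0, v 1, 0, 0] := by
    rw [aux_smul4]; simp [mul_comm]
  have e2 : ![(0:ℂ), 0, (c • v) 1, -((c • v) 0)] = c • ![0, 0, v 1, -(v 0)] := by
    rw [aux_smul4]; simp [mul_comm]
  unfold f9
  rw [e1, e2]
  exact Prod.ext (Submodule.span_singleton_smul_eq (isUnit_iff_ne_zero.mpr hc) _)
    (aux_span_pair_smul _ _ hc hc _ _)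

def phi9 (p : Projectivization ℂ (Fin 2 → ℂ)) :
    Submodule ℂ (Fin 4 → ℂ) × Submodule ℂ (Fin 4 → ℂ) := f9 p.rep

lemma aux_phi9_mk (v : Fin 2 → ℂ) (hv : v ≠ 0) :
    phi9 (Projectivization.mk ℂ v hv) = f9 v := by
  have h := Projectivization.mk_rep (Projectivization.mk ℂ v hv)
  rw [Projectivization.mk_eq_mk_iff] at h
  obtain ⟨a, ha⟩ := h
  rw [phi9, ← ha, Units.smul_def, aux_f9_smul _ (Units.ne_zero a)]

lemma aux_f9_w (a b : ℂ) (hb : b ≠ 0) : f9 ![a, b] = Fw (a / b) := by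
  have e1 : ![a, b, 0, 0] = b • ![a/b, 1, 0, 0] := by
    rw [aux_smul4]; field_simp; simp
  have e2 : ![(0:ℂ), 0, b, -a] = b • ![0, 0, 1, -(a/b)] := by
    rw [aux_smul4, show b * -(a/b) = -a from by field_simp]; norm_num
  unfold f9
  simp only [Matrix.cons_val_zero, Matrix.cons_val_one, Matrix.head_cons]
  rw [e1, e2, Fw]
  exact Prod.ext (Submodule.span_singleton_smul_eq (isUnit_iff_ne_zero.mpr hb) _)
    (aux_span_pair_smul _ _ hb hb _ _)

lemma aux_f9_inf (a : ℂ) (ha : a ≠ 0) : f9 ![a, 0] = Finfty := by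
  have e1 : ![a, (0:ℂ), 0, 0] = a • ![1, 0, 0, 0] := by rw [aux_smul4]; norm_num
  have e2 : ![(0:ℂ), 0, 0, -a] = (-a) • ![0, 0, 0, 1] := by rw [aux_smul4]; norm_num
  unfold f9
  simp only [Matrix.cons_val_zero, Matrix.cons_val_one, Matrix.head_cons, neg_zero]
  rw [e1, e2, Finfty]
  exact Prod.ext (Submodule.span_singleton_smul_eq (isUnit_iff_ne_zero.mpr ha) _)
    (aux_span_pair_smul _ _ ha (neg_ne_zero.mpr ha) _ _)

lemma aux_veta (v : Fin 2 → ℂ) : v = ![v 0, v 1] := by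
  ext i; fin_cases i <;> rfl

lemma aux_f9_gen (v : Fin 2 → ℂ) (hb : v 1 ≠ 0) : f9 v = Fw (v 0 / v 1) := by
  have h := aux_f9_w (v 0) (v 1) hb
  rwa [← aux_veta v] at h

lemma aux_f9_gen_inf (v : Fin 2 → ℂ) (hb : v 1 = 0) (ha : v 0 ≠ 0) : f9 v = Finfty := by
  have h := aux_f9_inf (v 0) ha
  rw [← hb, ← aux_veta v] at h
  exact h

lemma aux_phi9_inj : Function.Injective phi9 := by
  intro p q h
  induction p using Projectivization.ind with
  | h v hv =>
  induction q using Projectivization.ind with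
  | h u hu =>
  rw [aux_phi9_mk v hv, aux_phi9_mk u hu] at h
  have h1 : Submodule.span ℂ {![v 0, v 1, 0, 0]} = Submodule.span ℂ {![u 0, u 1, 0, 0]} :=
    congrArg Prod.fst h
  have hm : ![u 0, u 1, (0:ℂ), 0] ∈ Submodule.span ℂ {![v 0, v 1, 0, 0]} := by
    rw [h1]; exact Submodule.subset_span rfl
  obtain ⟨a, ha⟩ := Submodule.mem_span_singleton.mp hm
  have hu0 : u 0 = a * v 0 := by
    have := congrFun ha 0; simpa [aux_smul4] using this.symm
  have hu1 : u 1 = a * v 1 := by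
    have := congrFun ha 1; simpa [aux_smul4] using this.symm
  have hau : a • v = u := by
    ext i; fin_cases i <;> simp [hu0, hu1]
  have hane : a ≠ 0 := by
    rintro rfl
    rw [zero_smul] at hau
    exact hu hau.symm
  rw [Projectivization.mk_eq_mk_iff']
  exact ⟨a⁻¹, by rw [← hau, smul_smul, inv_mul_cancel₀ hane, one_smul]⟩

/-- The `K`-orbit of `F₀` equals `{F_w : w ∈ ℂ} ∪ {F_∞}`, and the map
`ℙ¹ → flags`, `[w : 1] ↦ F_w`, `[1 : 0] ↦ F_∞`, is an injection with image exactly this orbit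
(giving the isomorphism of the orbit with `ℙ¹(ℂ)` as a compact complex subvariety). -/
theorem K_orbit_F0_eq_P1 :
    ({Fl | ∃ g ∈ K9, mapFlag g F0 = Fl} =
      {Fl | ∃ w : ℂ, Fl = Fw w} ∪ {Finfty}) ∧
    ∃ φ : Projectivization ℂ (Fin 2 → ℂ) →
        Submodule ℂ (Fin 4 → ℂ) × Submodule ℂ (Fin 4 → ℂ),
      Function.Injective φ ∧
      Set.range φ = {Fl | ∃ g ∈ K9, mapFlag g F0 = Fl} ∧
      (∀ w : ℂ, φ (Projectivization.mk ℂ ![w, 1]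
        (by intro h; simpa using congrFun h 1)) = Fw w) ∧
      φ (Projectivization.mk ℂ ![1, 0]
        (by intro h; simpa using congrFun h 0)) = Finfty := by
  have hpart1 : ({Fl | ∃ g ∈ K9, mapFlag g F0 = Fl} =
      {Fl | ∃ w : ℂ, Fl = Fw w} ∪ {Finfty}) := by
    ext Fl
    constructor
    · intro h
      rcases aux_orbit_sub Fl h with h' | h'
      · exact Or.inl h'
      · exact Or.inr h'
    · rintro (⟨w, rfl⟩ | h)
      · exact aux_Fw_mem w
      · rw [Set.mem_singleton_iff] at h
        rw [h]
        exact aux_Finfty_mem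
  refine ⟨hpart1, phi9, aux_phi9_inj, ?_, ?_, ?_⟩
  · rw [hpart1]
    ext Fl
    constructor
    · rintro ⟨p, rfl⟩
      induction p using Projectivization.ind with
      | h v hv =>
      rw [aux_phi9_mk v hv]
      by_cases hb : v 1 = 0
      · have ha : v 0 ≠ 0 := by
          intro ha
          apply hv
          ext i; fin_cases i
          · exact ha
          · exact hb
        exact Or.inr (aux_f9_gen_inf v hb ha)
      · exact Or.inl ⟨v 0 / v 1, aux_f9_gen v hb⟩
    · rintro (⟨w, rfl⟩ | h)
      · refine ⟨Projectivization.mk ℂ ![w, 1] (by intro h; simpa using congrFun h 1), ?_⟩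
        rw [aux_phi9_mk, aux_f9_w w 1 one_ne_zero, div_one]
      · rw [Set.mem_singleton_iff] at h
        rw [h]
        refine ⟨Projectivization.mk ℂ ![1, 0] (by intro h; simpa using congrFun h 0), ?_⟩
        rw [aux_phi9_mk, aux_f9_inf 1 one_ne_zero]
  · intro w
    rw [aux_phi9_mk, aux_f9_w w 1 one_ne_zero, div_one]
  · rw [aux_phi9_mk, aux_f9_inf 1 one_ne_zero]


end
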